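/- Let A, B be closed discrete subsets of R^d and A' ⊆ A, B' ⊆ B closed discrete subsets with A∖A' and B∖B' infinite. If the kernel of F_{A',B'} : S(R^d) → S(A') ⊕ S(B'), f ↦ (f|_{A'}, f̂|_{B'}), is finite-dimensional, then the cokernel of F_{A,B} : S(R^d) → S(A) ⊕ S(B) is infinite-dimensional. -/

import Mathlib

open MeasureTheory

noncomputable def jb {d : ℕ} (x : EuclideanSpace ℝ (Fin d)) : ℝ := Real.sqrt (1 + ‖x‖ ^ 2)

/-- A sequence on `A` is rapidly decreasing if `|α(a)| ⟨a⟩^N` is bounded for every `N`. -/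
def IsRapid {d : ℕ} {A : Set (EuclideanSpace ℝ (Fin d))} (α : A → ℂ) : Prop :=
  ∀ N : ℕ, ∃ C : ℝ, ∀ a : A, ‖α a‖ * jb (a : EuclideanSpace ℝ (Fin d)) ^ N ≤ C

/-- The map `F_{A,B} f = (f|_A, f̂|_B)`. -/
noncomputable def restrMap {d : ℕ} (A B : Set (EuclideanSpace ℝ (Fin d)))
    (f : SchwartzMap (EuclideanSpace ℝ (Fin d)) ℂ) : (A → ℂ) × (B → ℂ) :=
  (fun a => f a, fun b => FourierTransform.fourier (⇑f) b)

/-- `F_{A,B}` has finite-dimensional cokernel: finitely many rapidly decreasing pairs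
span `𝓢(A) ⊕ 𝓢(B)` together with the image of `F_{A,B}`. -/
def CokerFinDim {d : ℕ} (A B : Set (EuclideanSpace ℝ (Fin d))) : Prop :=
  ∃ (n : ℕ) (v : Fin n → ((A → ℂ) × (B → ℂ))),
    (∀ i, IsRapid (v i).1 ∧ IsRapid (v i).2) ∧
    ∀ αβ : (A → ℂ) × (B → ℂ), IsRapid αβ.1 → IsRapid αβ.2 →
      ∃ (f : SchwartzMap (EuclideanSpace ℝ (Fin d)) ℂ) (c : Fin n → ℂ),
        αβ = restrMap A B f + ∑ i, c i • v i

-- restrMap as a linear map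
noncomputable def restrMapL {d : ℕ} (A B : Set (EuclideanSpace ℝ (Fin d))) :
    SchwartzMap (EuclideanSpace ℝ (Fin d)) ℂ →ₗ[ℂ] ((A → ℂ) × (B → ℂ)) where
  toFun := restrMap A B
  map_add' f g := by
    unfold restrMap
    refine Prod.ext (funext fun a => by simp) (funext fun b => ?_)
    show FourierTransform.fourier (⇑(f+g)) b = _
    rw [show FourierTransform.fourier (⇑(f+g)) = ⇑(SchwartzMap.fourierTransformCLM ℂ (f+g)) from
      rfl]
    simp [SchwartzMap.fourierTransformCLM_apply, SchwartzMap.fourier_coe]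
  map_smul' c f := by
    unfold restrMap
    refine Prod.ext (funext fun a => by simp) (funext fun b => ?_)
    show FourierTransform.fourier (⇑(c • f)) b = _
    rw [show FourierTransform.fourier (⇑(c • f)) = ⇑(SchwartzMap.fourierTransformCLM ℂ (c • f)) from
      rfl]
    simp [SchwartzMap.fourierTransformCLM_apply, SchwartzMap.fourier_coe]

set_option maxHeartbeats 1000000

/-- If `A' ⊆ A`, `B' ⊆ B` are closed discrete subsets with `A∖A'`, `B∖B'` infinite and
`Ker F_{A',B'}` is finite-dimensional, then `Coker F_{A,B}` is infinite-dimensional. -/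
theorem coker_infinite_of_subset_ker_findim (d : ℕ)
    (A B A' B' : Set (EuclideanSpace ℝ (Fin d)))
    (hA : IsClosed A) (hB : IsClosed B) (hA' : IsClosed A') (hB' : IsClosed B')
    (hAd : DiscreteTopology A) (hBd : DiscreteTopology B)
    (hA'd : DiscreteTopology A') (hB'd : DiscreteTopology B')
    (hAA : A' ⊆ A) (hBB : B' ⊆ B)
    (hAinf : (A \ A').Infinite) (hBinf : (B \ B').Infinite)
    (hker : ∃ (n : ℕ) (g : Fin n → SchwartzMap (EuclideanSpace ℝ (Fin d)) ℂ),
      ∀ f : SchwartzMap (EuclideanSpace ℝ (Fin d)) ℂ,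
        (∀ a ∈ A', f a = 0) → (∀ b ∈ B', FourierTransform.fourier (⇑f) b = 0) →
        f ∈ Submodule.span ℂ (Set.range g)) :
    ¬ CokerFinDim A B := by
  classical
  rintro ⟨n, v, hv, hspan⟩
  obtain ⟨m, gfun, hg⟩ := hker
  set N := n + m + 1 with hN
  -- choose N distinct points of A \ A'
  let e : ℕ ↪ ↥(A \ A') := hAinf.natEmbedding
  let a : Fin N → EuclideanSpace ℝ (Fin d) := fun i => ((e i : ↥(A \ A')) : _)
  have haA : ∀ i, a i ∈ A := fun i => (e i).2.1
  have haA' : ∀ i, a i ∉ A' := fun i => (e i).2.2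
  have hainj : Function.Injective a := by
    intro i j hij
    exact Fin.val_injective (e.injective (Subtype.val_injective hij))
  -- delta sequences
  let δ : Fin N → (A → ℂ) := fun i x => if (x : EuclideanSpace ℝ (Fin d)) = a i then 1 else 0
  have hδrapid : ∀ i, IsRapid (δ i) := by
    intro i M
    refine ⟨jb (a i) ^ M, fun x => ?_⟩
    by_cases h : (x : EuclideanSpace ℝ (Fin d)) = a i
    · simp [δ, h]
    · simp only [δ, h, if_neg, norm_zero, zero_mul, if_false]
      exact pow_nonneg (Real.sqrt_nonneg _) M
  have h0rapid : IsRapid (0 : B → ℂ) := fun M => ⟨0, fun x => by simp⟩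
  have key : ∀ i, ∃ (f : SchwartzMap (EuclideanSpace ℝ (Fin d)) ℂ) (c : Fin n → ℂ),
      (δ i, (0 : B → ℂ)) = restrMap A B f + ∑ j, c j • v j :=
    fun i => hspan (δ i, 0) (hδrapid i) h0rapid
  choose f c hfc using key
  -- linear maps
  let L : (Fin N → ℂ) →ₗ[ℂ] (Fin n → ℂ) :=
    { toFun := fun lam j => ∑ i, lam i * c i j
      map_add' := by intro x y; funext j; simp [add_mul, Finset.sum_add_distrib]
      map_smul' := by intro t x; funext j; simp [Finset.mul_sum, mul_assoc] }
  let Φ : (Fin N → ℂ) →ₗ[ℂ] SchwartzMap (EuclideanSpace ℝ (Fin d)) ℂ :=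
    { toFun := fun lam => ∑ i, lam i • f i
      map_add' := by intro x y; simp [add_smul, Finset.sum_add_distrib]
      map_smul' := by intro t x; simp [smul_smul, Finset.smul_sum] }
  have hmain : ∀ lam : Fin N → ℂ,
      (∑ i, lam i • (δ i, (0 : B → ℂ))) = restrMapL A B (Φ lam) + ∑ j, L lam j • v j := by
    intro lam
    have h1 : restrMapL A B (Φ lam) = ∑ i, lam i • restrMapL A B (f i) := by
      simp [Φ, map_sum, _root_.map_smul]
    have h2 : ∀ i, restrMapL A B (f i) = restrMap A B (f i) := fun i => rfl
    calc (∑ i, lam i • (δ i, (0 : B → ℂ)))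
        = ∑ i, lam i • (restrMap A B (f i) + ∑ j, c i j • v j) := by
          exact Finset.sum_congr rfl fun i _ => by rw [hfc i]
      _ = (∑ i, lam i • restrMap A B (f i)) + ∑ i, lam i • ∑ j, c i j • v j := by
          simp [smul_add, Finset.sum_add_distrib]
      _ = restrMapL A B (Φ lam) + ∑ j, L lam j • v j := by
          rw [h1]
          congr 1
          show ∑ i, lam i • ∑ j, c i j • v j = ∑ j, (∑ i, lam i * c i j) • v j
          simp only [Finset.smul_sum, smul_smul]
          rw [Finset.sum_comm]
          simp [Finset.sum_smul]
  -- facts for lam in the kernel of L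
  have hval : ∀ lam ∈ LinearMap.ker L, ∀ x : A,
      (Φ lam) (x : EuclideanSpace ℝ (Fin d)) = ∑ i, lam i * δ i x := by
    intro lam hlam x
    have h0 : L lam = 0 := hlam
    have h := hmain lam
    rw [h0] at h
    simp only [Pi.zero_apply, zero_smul, Finset.sum_const_zero, add_zero] at h
    have hfst := congrArg Prod.fst h
    simp only [Prod.fst_sum, Prod.smul_fst] at hfst
    have := congrFun hfst x
    simp only [Finset.sum_apply, Pi.smul_apply, smul_eq_mul] at this
    exact this.symm
  have hfour : ∀ lam ∈ LinearMap.ker L, ∀ b : B,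
      FourierTransform.fourier (⇑(Φ lam)) (b : EuclideanSpace ℝ (Fin d)) = 0 := by
    intro lam hlam b
    have h0 : L lam = 0 := hlam
    have h := hmain lam
    rw [h0] at h
    simp only [Pi.zero_apply, zero_smul, Finset.sum_const_zero, add_zero] at h
    have hsnd := congrArg Prod.snd h
    simp only [Prod.snd_sum, Prod.smul_snd, smul_zero, Finset.sum_const_zero] at hsnd
    exact (congrFun hsnd b).symm
  -- membership in the span
  have hmem : ∀ lam ∈ LinearMap.ker L, Φ lam ∈ Submodule.span ℂ (Set.range gfun) := by
    intro lam hlam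
    apply hg
    · intro x hx
      rw [hval lam hlam ⟨x, hAA hx⟩]
      refine Finset.sum_eq_zero fun i _ => ?_
      have : x ≠ a i := fun hh => haA' i (hh ▸ hx)
      simp [δ, this]
    · intro b hb
      exact hfour lam hlam ⟨b, hBB hb⟩
  -- injectivity on the kernel of L
  have hinj : ∀ lam ∈ LinearMap.ker L, Φ lam = 0 → lam = 0 := by
    intro lam hlam hΦ
    funext k
    have h := hval lam hlam ⟨a k, haA k⟩
    rw [hΦ] at h
    simp only [SchwartzMap.coe_zero, Pi.zero_apply] at h
    have hsum : ∑ i, lam i * δ i ⟨a k, haA k⟩ = lam k := by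
      rw [Finset.sum_eq_single k]
      · simp [δ]
      · intro i _ hik
        have : a k ≠ a i := fun hh => hik (hainj hh).symm
        simp [δ, this]
      · simp
    rw [hsum] at h
    exact h.symm
  -- dimension count
  haveI : FiniteDimensional ℂ (Submodule.span ℂ (Set.range gfun)) :=
    FiniteDimensional.span_of_finite ℂ (Set.finite_range gfun)
  let K := LinearMap.ker L
  let Ψ : K →ₗ[ℂ] Submodule.span ℂ (Set.range gfun) :=
    LinearMap.codRestrict _ ((Φ.comp K.subtype)) (fun x => hmem x x.2)
  have hΨinj : Function.Injective Ψ := by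
    intro x y hxy
    have hxy' : Φ (x : Fin N → ℂ) = Φ (y : Fin N → ℂ) := congrArg Subtype.val hxy
    have hz : Φ ((x : Fin N → ℂ) - (y : Fin N → ℂ)) = 0 := by
      rw [map_sub, hxy', sub_self]
    have := hinj _ (K.sub_mem x.2 y.2) hz
    exact Subtype.ext (sub_eq_zero.mp this)
  have h1 : Module.finrank ℂ (LinearMap.ker L) ≤ Module.finrank ℂ (Submodule.span ℂ (Set.range gfun)) :=
    LinearMap.finrank_le_finrank_of_injective hΨinj
  have h2 : Module.finrank ℂ (Submodule.span ℂ (Set.range gfun)) ≤ m := by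
    refine le_trans (finrank_span_le_card (Set.range gfun)) ?_
    rw [Set.toFinset_range]
    exact le_trans Finset.card_image_le (by simp)
  have h3 : Module.finrank ℂ (LinearMap.range L) ≤ n :=
    le_trans (Submodule.finrank_le _) (by simp [Module.finrank_fin_fun])
  have h4 := LinearMap.finrank_range_add_finrank_ker L
  rw [Module.finrank_fin_fun] at h4
  have h5 := h4.trans hN
  omega
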